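/- Let F = {A_1,…,A_r} be a family of nonempty subsets of [n] such that A ∪ B ∈ F whenever A, B ∈ F and A ∩ B ≠ ∅. Then the transversal polymatroidal ideal I = P_{A_1} ⋯ P_{A_r} satisfies Ass(S/I) = { P_A : A ∈ F }. -/

import Mathlib

open MvPolynomial

/-- The monomial prime ideal `P_F = (x_i : i ∈ F)`. -/
noncomputable def PF {K : Type} [Field K] {n : ℕ} (F : Finset (Fin n)) :
    Ideal (MvPolynomial (Fin n) K) :=
  Ideal.span ((fun i => (X i : MvPolynomial (Fin n) K)) '' ↑F)

namespace Stmt11Aux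

variable {K : Type} [Field K] {n : ℕ}


def wt (A : Finset (Fin n)) (s : Fin n →₀ ℕ) : ℕ := ∑ i ∈ A, s i

lemma wt_add (A : Finset (Fin n)) (s t : Fin n →₀ ℕ) : wt A (s + t) = wt A s + wt A t := by
  simp [wt, Finset.sum_add_distrib]

lemma wt_mono {A : Finset (Fin n)} {s t : Fin n →₀ ℕ} (h : s ≤ t) : wt A s ≤ wt A t :=
  Finset.sum_le_sum fun i _ => h i

lemma wt_single (A : Finset (Fin n)) (i : Fin n) :
    wt A (Finsupp.single i 1) = if i ∈ A then 1 else 0 := by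
  classical
  simp [wt, Finsupp.single_apply, Finset.sum_ite_eq', eq_comm]

lemma wt_sum_single {ι : Type} (t : Finset ι) (c : ι → Fin n) (A : Finset (Fin n))
    (hc : ∀ i ∈ t, c i ∈ A) :
    wt A (∑ i ∈ t, Finsupp.single (c i) 1) = t.card := by
  classical
  induction t using Finset.induction with
  | empty => simp [wt]
  | @insert a s ha ih =>
    rw [Finset.sum_insert ha, wt_add, wt_single, if_pos (hc a (Finset.mem_insert_self a s)),
      ih fun i hi => hc i (Finset.mem_insert_of_mem hi), Finset.card_insert_of_notMem ha]
    ring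

lemma wt_zero (A : Finset (Fin n)) : wt A 0 = 0 := by simp [wt]

lemma wt_finset_sum {ι : Type} (t : Finset ι) (f : ι → (Fin n →₀ ℕ)) (A : Finset (Fin n)) :
    wt A (∑ i ∈ t, f i) = ∑ i ∈ t, wt A (f i) := by
  classical
  induction t using Finset.induction with
  | empty => simp [wt_zero]
  | @insert a s ha ih => rw [Finset.sum_insert ha, wt_add, ih, Finset.sum_insert ha]

def dd (𝓕 : Finset (Finset (Fin n))) (A : Finset (Fin n)) : ℕ :=
  (𝓕.filter (· ⊆ A)).card

lemma PF_eq_span_monomial (A : Finset (Fin n)) :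
    (PF A : Ideal (MvPolynomial (Fin n) K)) =
      Ideal.span ((fun v => monomial v (1 : K)) ''
        ((fun i => Finsupp.single i 1) '' (A : Set (Fin n)))) := by
  rw [PF, Set.image_image]; rfl

lemma prod_span_monomial {ι : Type} [DecidableEq ι] [Nonempty (Fin n)]
    (t : Finset ι) (A : ι → Finset (Fin n)) :
    (∏ i ∈ t, Ideal.span ((fun v => monomial v (1 : K)) ''
        ((fun j => Finsupp.single j 1) '' (A i : Set (Fin n))))) =
      Ideal.span ((fun v => monomial v (1 : K)) ''
        {v | ∃ c : ι → Fin n, (∀ i ∈ t, c i ∈ A i) ∧ v = ∑ i ∈ t, Finsupp.single (c i) 1}) := by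
  classical
  induction t using Finset.induction with
  | empty =>
    simp only [Finset.prod_empty]
    have : {v : Fin n →₀ ℕ | ∃ c : ι → Fin n, (∀ i ∈ (∅ : Finset ι), c i ∈ A i) ∧
        v = ∑ i ∈ (∅ : Finset ι), Finsupp.single (c i) 1} = {0} := by
      ext v
      constructor
      · rintro ⟨c, -, rfl⟩; simp
      · rintro rfl; exact ⟨fun _ => Classical.arbitrary _, by simp, by simp⟩
    rw [this]
    simp [Ideal.one_eq_top, Ideal.span_singleton_one]
  | @insert a s ha ih =>
    rw [Finset.prod_insert ha, ih, Ideal.span_mul_span']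
    congr 1
    ext p
    constructor
    · rintro ⟨x, ⟨u, ⟨i, hiA, rfl⟩, rfl⟩, y, ⟨v, ⟨c, hc, rfl⟩, rfl⟩, rfl⟩
      refine ⟨Finsupp.single i 1 + ∑ j ∈ s, Finsupp.single (c j) 1,
        ⟨Function.update c a i, ?_, ?_⟩, by simp [monomial_mul]⟩
      · intro j hj
        by_cases hja : j = a
        · subst hja; simpa [Function.update_self] using hiA
        · rw [Function.update_of_ne hja]
          exact hc j ((Finset.mem_insert.mp hj).resolve_left hja)
      · rw [Finset.sum_insert ha, Function.update_self]
        congr 1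
        refine Finset.sum_congr rfl fun j hj => ?_
        have hja : j ≠ a := by rintro rfl; exact ha hj
        rw [Function.update_of_ne hja]
    · rintro ⟨v, ⟨c, hc, rfl⟩, rfl⟩
      rw [Finset.sum_insert ha]
      exact ⟨monomial (Finsupp.single (c a) 1) 1,
        ⟨Finsupp.single (c a) 1, ⟨c a, by simpa using hc a (Finset.mem_insert_self a s), rfl⟩, rfl⟩,
        monomial (∑ j ∈ s, Finsupp.single (c j) 1) 1,
        ⟨_, ⟨c, fun j hj => hc j (Finset.mem_insert_of_mem hj), rfl⟩, rfl⟩,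
        by simp [monomial_mul]⟩

lemma mem_prod_PF_iff {ι : Type} [DecidableEq ι] [Nonempty (Fin n)]
    (t : Finset ι) (A : ι → Finset (Fin n)) {f : MvPolynomial (Fin n) K} :
    f ∈ ∏ i ∈ t, PF (K := K) (A i) ↔
      ∀ s ∈ f.support, ∃ c : ι → Fin n,
        (∀ i ∈ t, c i ∈ A i) ∧ ∑ i ∈ t, Finsupp.single (c i) 1 ≤ s := by
  conv_lhs => rw [show (∏ i ∈ t, PF (K := K) (A i)) = _ from
    Finset.prod_congr rfl fun i _ => PF_eq_span_monomial (A i)]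
  rw [prod_span_monomial, mem_ideal_span_monomial_image]
  constructor
  · intro h s hs
    obtain ⟨si, ⟨c, hc, rfl⟩, hle⟩ := h s hs
    exact ⟨c, hc, hle⟩
  · intro h s hs
    obtain ⟨c, hc, hle⟩ := h s hs
    exact ⟨_, ⟨c, hc, rfl⟩, hle⟩

lemma exists_le_of_wt_ge (A : Finset (Fin n)) (hA : A.Nonempty) (d : ℕ) (s : Fin n →₀ ℕ)
    (h : d ≤ wt A s) :
    ∃ c : ℕ → Fin n, (∀ j ∈ Finset.range d, c j ∈ A) ∧
      ∑ j ∈ Finset.range d, Finsupp.single (c j) 1 ≤ s := by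
  classical
  induction d with
  | zero => exact ⟨fun _ => hA.choose, by simp, by simp⟩
  | succ d ih =>
    obtain ⟨c, hc, hle⟩ := ih (le_trans (Nat.le_succ d) h)
    -- find i₀ ∈ A with (∑ j ∈ range d, single (c j) 1) i₀ < s i₀
    have hwt : wt A (∑ j ∈ Finset.range d, Finsupp.single (c j) 1) = d :=
      wt_sum_single _ _ _ hc |>.trans (by simp)
    have : ∃ i₀ ∈ A, (∑ j ∈ Finset.range d, Finsupp.single (c j) 1) i₀ < s i₀ := by
      by_contra hcon
      push_neg at hcon
      have : wt A s ≤ d := hwt ▸ Finset.sum_le_sum fun i hi => hcon i hi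
      omega
    obtain ⟨i₀, hi₀A, hi₀⟩ := this
    refine ⟨fun j => if j = d then i₀ else c j, ?_, ?_⟩
    · intro j hj
      by_cases hjd : j = d
      · simpa [hjd] using hi₀A
      · simpa [hjd] using hc j (by simp at hj ⊢; omega)
    · rw [Finset.sum_range_succ]
      have hre : (∑ x ∈ Finset.range d,
            Finsupp.single ((fun j => if j = d then i₀ else c j) x) (1:ℕ)) =
          ∑ j ∈ Finset.range d, Finsupp.single (c j) 1 :=
        Finset.sum_congr rfl fun j hj => by
          simp only []
          rw [if_neg (by simp at hj; omega)]
      have h2 : Finsupp.single ((fun j => if j = d then i₀ else c j) d) (1:ℕ) =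
          Finsupp.single i₀ 1 := by simp
      rw [hre, h2]
      intro i
      simp only [Finsupp.add_apply, Finsupp.single_apply]
      by_cases hii : i₀ = i
      · subst hii
        have h3 := hi₀
        simp only [if_pos rfl, if_true, eq_self_iff_true]
        omega
      · simp only [if_neg hii, add_zero]
        exact hle i

lemma mem_pow_PF_iff [Nonempty (Fin n)] (A : Finset (Fin n)) (hA : A.Nonempty) (d : ℕ)
    {f : MvPolynomial (Fin n) K} :
    f ∈ (PF (K := K) A) ^ d ↔ ∀ s ∈ f.support, d ≤ wt A s := by
  classical
  have : (PF (K := K) A) ^ d = ∏ _j ∈ Finset.range d, PF (K := K) A := by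
    rw [Finset.prod_const, Finset.card_range]
  rw [this, mem_prod_PF_iff (A := fun _ => A)]
  constructor
  · intro h s hs
    obtain ⟨c, hc, hle⟩ := h s hs
    calc d = wt A (∑ j ∈ Finset.range d, Finsupp.single (c j) 1) := by
            rw [wt_sum_single _ _ _ hc, Finset.card_range]
      _ ≤ wt A s := wt_mono hle
  · intro h s hs
    exact exists_le_of_wt_ge A hA d s (h s hs)

noncomputable def lowPart (A : Finset (Fin n)) (j : ℕ) (a : MvPolynomial (Fin n) K) :
    MvPolynomial (Fin n) K :=
  ∑ s ∈ a.support.filter (fun s => wt A s = j), monomial s (coeff s a)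

lemma coeff_lowPart (A : Finset (Fin n)) (j : ℕ) (a : MvPolynomial (Fin n) K) (u : Fin n →₀ ℕ) :
    coeff u (lowPart A j a) = if wt A u = j then coeff u a else 0 := by
  classical
  rw [lowPart, coeff_sum]
  simp only [coeff_monomial]
  rw [Finset.sum_ite_eq' (a.support.filter (fun s => wt A s = j)) u (fun s => coeff s a)]
  by_cases h1 : wt A u = j
  · by_cases h2 : u ∈ a.support
    · simp [Finset.mem_filter, h1, h2]
    · simp [Finset.mem_filter, h1, h2, notMem_support_iff.mp h2]
  · simp [Finset.mem_filter, h1]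

lemma primary_step [Nonempty (Fin n)] (A : Finset (Fin n)) (hA : A.Nonempty) (d : ℕ)
    {a b : MvPolynomial (Fin n) K} (hab : a * b ∈ (PF (K := K) A) ^ d)
    (hb : b ∉ (PF (K := K) A) ^ 1) : a ∈ (PF (K := K) A) ^ d := by
  classical
  by_contra ha
  rw [mem_pow_PF_iff A hA] at ha hab
  push_neg at ha
  -- b has a monomial of weight 0
  rw [mem_pow_PF_iff A hA] at hb
  push_neg at hb
  obtain ⟨sb, hsb, hsb0⟩ := hb
  have hsb0 : wt A sb = 0 := by omega
  -- the minimal weight of a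
  have hane : a.support.Nonempty := by
    obtain ⟨sa, hsa, _⟩ := ha
    exact ⟨sa, hsa⟩
  set j0 : ℕ := (a.support.image (wt A)).min' (hane.image _) with hj0
  obtain ⟨s0, hs0, hs0w⟩ := Finset.mem_image.mp ((a.support.image (wt A)).min'_mem (hane.image _))
  have hmin : ∀ s ∈ a.support, j0 ≤ wt A s := fun s hs =>
    Finset.min'_le _ _ (Finset.mem_image_of_mem _ hs)
  have hj0d : j0 < d := by
    obtain ⟨sa, hsa, hlt⟩ := ha
    exact lt_of_le_of_lt (hmin sa hsa) hlt
  set a' := lowPart A j0 a with ha'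
  set b' := lowPart A 0 b with hb'
  have ha'0 : a' ≠ 0 := fun hc => by
    have := coeff_lowPart A j0 a s0
    rw [← ha', hc] at this
    simp only [coeff_zero] at this
    rw [if_pos hs0w] at this
    exact mem_support_iff.mp hs0 this.symm
  have hb'0 : b' ≠ 0 := fun hc => by
    have := coeff_lowPart A 0 b sb
    rw [← hb', hc] at this
    simp only [coeff_zero] at this
    rw [if_pos hsb0] at this
    exact mem_support_iff.mp hsb this.symm
  -- key coefficient identity
  have key : ∀ s : Fin n →₀ ℕ, wt A s = j0 → coeff s (a * b) = coeff s (a' * b') := by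
    intro s hsw
    rw [coeff_mul, coeff_mul]
    refine Finset.sum_congr rfl fun x hx => ?_
    have hxs : x.1 + x.2 = s := Finset.HasAntidiagonal.mem_antidiagonal.mp hx
    have hwsum : wt A x.1 + wt A x.2 = j0 := by rw [← wt_add, hxs, hsw]
    by_cases hv : wt A x.2 = 0
    · have hu : wt A x.1 = j0 := by omega
      rw [coeff_lowPart, coeff_lowPart, if_pos hu, if_pos hv]
    · have hu : wt A x.1 < j0 := by omega
      have hua : coeff x.1 a = 0 := by
        by_contra hc
        exact absurd (hmin x.1 (mem_support_iff.mpr hc)) (by omega)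
      rw [coeff_lowPart, coeff_lowPart, if_neg (by omega), hua, zero_mul, zero_mul]
  -- a'*b' ≠ 0, pick a monomial of it
  have hab' : a' * b' ≠ 0 := mul_ne_zero ha'0 hb'0
  obtain ⟨s1, hs1⟩ := ne_zero_iff.mp hab'
  have hs1m : s1 ∈ (a' * b').support := mem_support_iff.mpr hs1
  have hs1w : wt A s1 = j0 := by
    obtain ⟨u, hu, v, hv, rfl⟩ := Finset.mem_add.mp (support_mul a' b' hs1m)
    have hu' : wt A u = j0 := by
      have := coeff_lowPart A j0 a u
      rw [← ha'] at this
      by_contra hc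
      rw [if_neg hc] at this
      exact mem_support_iff.mp hu this
    have hv' : wt A v = 0 := by
      have := coeff_lowPart A 0 b v
      rw [← hb'] at this
      by_contra hc
      rw [if_neg hc] at this
      exact mem_support_iff.mp hv this
    rw [wt_add, hu', hv']
    omega
  have : s1 ∈ (a * b).support := by
    rw [mem_support_iff, key s1 hs1w]
    exact hs1
  have := hab s1 this
  omega

lemma hall_core (𝓕 : Finset (Finset (Fin n))) (hne : ∀ A ∈ 𝓕, A.Nonempty)
    (hclosed : ∀ A ∈ 𝓕, ∀ B ∈ 𝓕, (A ∩ B).Nonempty → A ∪ B ∈ 𝓕) (m : Fin n →₀ ℕ)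
    (h : ∀ A ∈ 𝓕, dd 𝓕 A ≤ wt A m) (𝓖 : Finset (Finset (Fin n))) (h𝓖 : 𝓖 ⊆ 𝓕) :
    𝓖.card ≤ ∑ i ∈ 𝓖.biUnion id, m i := by
  classical
  set W : Finset (Fin n) := 𝓖.biUnion id with hW
  set 𝓢 : Finset (Finset (Fin n)) := 𝓕.filter (· ⊆ W) with h𝓢
  set Max : Finset (Finset (Fin n)) := 𝓢.filter (fun M => ∀ C ∈ 𝓢, M ⊆ C → M = C) with hMax
  -- every element of 𝓢 lies below a maximal one
  have hup : ∀ C ∈ 𝓢, ∃ M ∈ Max, C ⊆ M := by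
    intro C hC
    obtain ⟨M, hM, hmax⟩ := Finset.exists_maximal (s := 𝓢.filter (C ⊆ ·)) ⟨C, by
      simp only [Finset.mem_filter]; exact ⟨hC, Finset.Subset.refl C⟩⟩
    obtain ⟨hM𝓢, hCM⟩ := Finset.mem_filter.mp hM
    refine ⟨M, Finset.mem_filter.mpr ⟨hM𝓢, fun C' hC' hMC' => ?_⟩, hCM⟩
    exact le_antisymm hMC' (hmax (Finset.mem_filter.mpr ⟨hC', hCM.trans hMC'⟩) hMC')
  -- maximal elements are pairwise disjoint
  have hdisj : ∀ M₁ ∈ Max, ∀ M₂ ∈ Max, M₁ ≠ M₂ → Disjoint M₁ M₂ := by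
    intro M₁ hM₁ M₂ hM₂ hne12
    obtain ⟨hM₁𝓢, hmax₁⟩ := Finset.mem_filter.mp hM₁
    obtain ⟨hM₂𝓢, hmax₂⟩ := Finset.mem_filter.mp hM₂
    rw [Finset.disjoint_left]
    intro i hi1 hi2
    have hUn : M₁ ∪ M₂ ∈ 𝓢 := by
      have h1 := Finset.mem_filter.mp hM₁𝓢
      have h2 := Finset.mem_filter.mp hM₂𝓢
      refine Finset.mem_filter.mpr ⟨hclosed _ h1.1 _ h2.1 ⟨i, Finset.mem_inter.mpr ⟨hi1, hi2⟩⟩, ?_⟩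
      exact Finset.union_subset h1.2 h2.2
    have e1 : M₁ = M₁ ∪ M₂ := hmax₁ _ hUn Finset.subset_union_left
    have e2 : M₂ = M₁ ∪ M₂ := hmax₂ _ hUn Finset.subset_union_right
    exact hne12 (e1.trans e2.symm)
  -- 𝓖 is covered by the fibers over maximal elements
  have hcover : 𝓖 ⊆ Max.biUnion (fun M => 𝓖.filter (· ⊆ M)) := by
    intro C hC
    have hC𝓢 : C ∈ 𝓢 := Finset.mem_filter.mpr ⟨h𝓖 hC, Finset.subset_biUnion_of_mem id hC⟩
    obtain ⟨M, hM, hCM⟩ := hup C hC𝓢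
    exact Finset.mem_biUnion.mpr ⟨M, hM, Finset.mem_filter.mpr ⟨hC, hCM⟩⟩
  calc 𝓖.card ≤ (Max.biUnion fun M => 𝓖.filter (· ⊆ M)).card := Finset.card_le_card hcover
    _ ≤ ∑ M ∈ Max, (𝓖.filter (· ⊆ M)).card := Finset.card_biUnion_le
    _ ≤ ∑ M ∈ Max, dd 𝓕 M := by
        refine Finset.sum_le_sum fun M _ => ?_
        exact Finset.card_le_card (Finset.filter_subset_filter _ h𝓖)
    _ ≤ ∑ M ∈ Max, wt M m := by
        refine Finset.sum_le_sum fun M hM => ?_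
        have := Finset.mem_filter.mp ((Finset.mem_filter.mp hM).1)
        exact h M this.1
    _ = ∑ i ∈ Max.biUnion id, m i := by
        rw [Finset.sum_biUnion]
        · rfl
        · intro M₁ hM₁ M₂ hM₂ hne12
          exact hdisj M₁ (by simpa using hM₁) M₂ (by simpa using hM₂) hne12
    _ ≤ ∑ i ∈ W, m i := by
        refine Finset.sum_le_sum_of_subset ?_
        intro i hi
        obtain ⟨M, hM, hiM⟩ := Finset.mem_biUnion.mp hi
        exact (Finset.mem_filter.mp ((Finset.mem_filter.mp hM).1)).2 hiM

lemma sum_single_apply {ι : Type} [DecidableEq ι] (t : Finset ι) (c : ι → Fin n) (i : Fin n) :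
    (∑ x ∈ t, Finsupp.single (c x) 1) i = (t.filter (fun x => c x = i)).card := by
  classical
  rw [Finset.sum_apply']
  simp only [Finsupp.single_apply]
  rw [Finset.card_filter]

lemma exists_choice [Nonempty (Fin n)] (𝓕 : Finset (Finset (Fin n)))
    (hne : ∀ A ∈ 𝓕, A.Nonempty)
    (hclosed : ∀ A ∈ 𝓕, ∀ B ∈ 𝓕, (A ∩ B).Nonempty → A ∪ B ∈ 𝓕) (m : Fin n →₀ ℕ)
    (h : ∀ A ∈ 𝓕, dd 𝓕 A ≤ wt A m) :
    ∃ c : Finset (Fin n) → Fin n, (∀ A ∈ 𝓕, c A ∈ A) ∧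
      ∑ A ∈ 𝓕, Finsupp.single (c A) 1 ≤ m := by
  classical
  -- the bipartite "resource" sets
  set g : Fin n → Finset (Fin n × ℕ) := fun i => (Finset.range (m i)).image (fun k => (i, k))
    with hg
  set t : {A // A ∈ 𝓕} → Finset (Fin n × ℕ) := fun A => (A : Finset (Fin n)).biUnion g with ht
  have hcardg : ∀ i, (g i).card = m i := fun i => by
    rw [hg]
    rw [Finset.card_image_of_injective _ (fun k₁ k₂ hk => by simpa using hk)]
    exact Finset.card_range _
  have hgdisj : ∀ i₁ i₂ : Fin n, i₁ ≠ i₂ → Disjoint (g i₁) (g i₂) := by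
    intro i₁ i₂ hne12
    rw [Finset.disjoint_left]
    rintro ⟨a, b⟩ h1 h2
    simp only [hg, Finset.mem_image, Finset.mem_range, Prod.mk.injEq] at h1 h2
    obtain ⟨k₁, -, rfl, -⟩ := h1
    obtain ⟨k₂, -, rfl, -⟩ := h2
    exact hne12 rfl
  -- Hall's condition
  have hhall : ∀ s : Finset {A // A ∈ 𝓕}, s.card ≤ (s.biUnion t).card := by
    intro s
    set 𝓖 : Finset (Finset (Fin n)) := s.image Subtype.val with h𝓖
    have hcard : 𝓖.card = s.card := Finset.card_image_of_injective _ Subtype.val_injective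
    have hbu : s.biUnion t = (𝓖.biUnion id).biUnion g := by
      ext p
      simp only [Finset.mem_biUnion, h𝓖, Finset.mem_image, id]
      constructor
      · rintro ⟨A, hA, hp⟩
        obtain ⟨i, hi, hpg⟩ := Finset.mem_biUnion.mp hp
        exact ⟨i, ⟨A, ⟨A, hA, rfl⟩, hi⟩, hpg⟩
      · rintro ⟨i, ⟨B, ⟨A, hA, rfl⟩, hi⟩, hpg⟩
        exact ⟨A, hA, Finset.mem_biUnion.mpr ⟨i, hi, hpg⟩⟩
    have hsub : 𝓖 ⊆ 𝓕 := by
      intro B hB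
      obtain ⟨A, _, rfl⟩ := Finset.mem_image.mp hB
      exact A.2
    calc s.card = 𝓖.card := hcard.symm
      _ ≤ ∑ i ∈ 𝓖.biUnion id, m i := hall_core 𝓕 hne hclosed m h 𝓖 hsub
      _ = ((𝓖.biUnion id).biUnion g).card := by
          rw [Finset.card_biUnion (fun i₁ _ i₂ _ h12 => hgdisj i₁ i₂ h12)]
          exact Finset.sum_congr rfl fun i _ => (hcardg i).symm
      _ = (s.biUnion t).card := by rw [hbu]
  obtain ⟨f, hfinj, hft⟩ := (Finset.all_card_le_biUnion_card_iff_exists_injective t).mp hhall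
  -- extract choice function
  refine ⟨fun A => if hA : A ∈ 𝓕 then (f ⟨A, hA⟩).1 else Classical.arbitrary _, ?_, ?_⟩
  · intro A hA
    simp only [dif_pos hA]
    have := hft ⟨A, hA⟩
    obtain ⟨i, hi, hpg⟩ := Finset.mem_biUnion.mp this
    simp only [hg, Finset.mem_image, Finset.mem_range] at hpg
    obtain ⟨k, -, hk⟩ := hpg
    rw [← hk]
    exact hi
  · intro i
    rw [sum_single_apply]
    -- count the fiber
    have hinj : Set.InjOn (fun A => if hA : A ∈ 𝓕 then (f ⟨A, hA⟩).2 else 0)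
        (𝓕.filter (fun A => (if hA : A ∈ 𝓕 then (f ⟨A, hA⟩).1 else Classical.arbitrary _) = i)) := by
      intro A hA B hB hAB
      have hA' := Finset.mem_filter.mp hA
      have hB' := Finset.mem_filter.mp hB
      simp only [dif_pos hA'.1, dif_pos hB'.1] at hAB
      have h1 : (f ⟨A, hA'.1⟩).1 = i := by simpa [dif_pos hA'.1] using hA'.2
      have h2 : (f ⟨B, hB'.1⟩).1 = i := by simpa [dif_pos hB'.1] using hB'.2
      have : f ⟨A, hA'.1⟩ = f ⟨B, hB'.1⟩ := Prod.ext (h1.trans h2.symm) hAB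
      exact congrArg Subtype.val (hfinj this)
    have hmaps : ∀ A ∈ 𝓕.filter (fun A =>
        (if hA : A ∈ 𝓕 then (f ⟨A, hA⟩).1 else Classical.arbitrary _) = i),
        (if hA : A ∈ 𝓕 then (f ⟨A, hA⟩).2 else 0) ∈ Finset.range (m i) := by
      intro A hA
      have hA' := Finset.mem_filter.mp hA
      have h1 : (f ⟨A, hA'.1⟩).1 = i := by simpa [dif_pos hA'.1] using hA'.2
      have := hft ⟨A, hA'.1⟩
      obtain ⟨j, hj, hpg⟩ := Finset.mem_biUnion.mp this
      simp only [hg, Finset.mem_image, Finset.mem_range] at hpg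
      obtain ⟨k, hk, hke⟩ := hpg
      simp only [dif_pos hA'.1]
      rw [Finset.mem_range]
      have h2k : (f ⟨A, hA'.1⟩).2 = k := by rw [← hke]
      have hji : j = i := by rw [← h1, ← hke]
      rw [h2k, ← hji]
      exact hk
    calc (𝓕.filter _).card ≤ (Finset.range (m i)).card :=
          Finset.card_le_card_of_injOn _ hmaps hinj
      _ = m i := Finset.card_range _

lemma PF_mono {A B : Finset (Fin n)} (h : A ⊆ B) : PF (K := K) A ≤ PF (K := K) B :=
  Ideal.span_mono (Set.image_mono (by exact_mod_cast h))

lemma prod_ideal_mono {ι : Type} {R : Type*} [CommSemiring R] (t : Finset ι)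
    (f g : ι → Ideal R) (h : ∀ i ∈ t, f i ≤ g i) : ∏ i ∈ t, f i ≤ ∏ i ∈ t, g i := by
  classical
  induction t using Finset.induction with
  | empty => simp
  | @insert a s ha ih =>
    rw [Finset.prod_insert ha, Finset.prod_insert ha]
    exact Ideal.mul_mono (h a (Finset.mem_insert_self a s))
      (ih fun i hi => h i (Finset.mem_insert_of_mem hi))

lemma decomp [Nonempty (Fin n)] (𝓕 : Finset (Finset (Fin n)))
    (hne : ∀ A ∈ 𝓕, A.Nonempty)
    (hclosed : ∀ A ∈ 𝓕, ∀ B ∈ 𝓕, (A ∩ B).Nonempty → A ∪ B ∈ 𝓕) :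
    ∏ A ∈ 𝓕, PF (K := K) A = 𝓕.inf (fun A => PF (K := K) A ^ dd 𝓕 A) := by
  classical
  apply le_antisymm
  · apply Finset.le_inf
    intro B hB
    calc ∏ A ∈ 𝓕, PF (K := K) A
        = (∏ A ∈ 𝓕.filter (· ⊆ B), PF (K := K) A) *
            ∏ A ∈ 𝓕.filter (¬ · ⊆ B), PF (K := K) A :=
          (Finset.prod_filter_mul_prod_filter_not 𝓕 (· ⊆ B) _).symm
      _ ≤ ∏ A ∈ 𝓕.filter (· ⊆ B), PF (K := K) A := Ideal.mul_le_left
      _ ≤ ∏ _A ∈ 𝓕.filter (· ⊆ B), PF (K := K) B :=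
          prod_ideal_mono _ _ _ fun A hA => PF_mono (Finset.mem_filter.mp hA).2
      _ = PF (K := K) B ^ dd 𝓕 B := by rw [Finset.prod_const, dd]
  · intro f hf
    rw [Submodule.mem_finsetInf] at hf
    refine (mem_prod_PF_iff 𝓕 id (f := f)).mpr ?_
    intro s hs
    have hwts : ∀ A ∈ 𝓕, dd 𝓕 A ≤ wt A s := by
      intro A hA
      exact (mem_pow_PF_iff A (hne A hA) (dd 𝓕 A)).mp (hf A hA) s hs
    obtain ⟨c, hc, hcle⟩ := exists_choice 𝓕 hne hclosed s hwts
    exact ⟨c, hc, hcle⟩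

lemma isAssociatedPrime_quotient_iff {R : Type*} [CommRing R] [IsNoetherianRing R] {I P : Ideal R} :
    IsAssociatedPrime P (R ⧸ I) ↔ P.IsPrime ∧ ∃ f : R, P = I.colon (Ideal.span {f}) := by
  rw [isAssociatedPrime_iff]
  constructor
  · rintro ⟨hP, x, hx⟩
    obtain ⟨f, rfl⟩ := Ideal.Quotient.mk_surjective x
    refine ⟨hP, f, hx.trans ?_⟩
    ext r
    rw [Submodule.mem_colon_singleton, Submodule.mem_bot, Ideal.mem_colon_span_singleton]
    rw [show r • (Ideal.Quotient.mk I) f = Ideal.Quotient.mk I (r * f) from rfl,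
      Ideal.Quotient.eq_zero_iff_mem]
  · rintro ⟨hP, f, hf⟩
    refine ⟨hP, Ideal.Quotient.mk I f, hf.trans ?_⟩
    ext r
    rw [Ideal.mem_colon_span_singleton, Submodule.mem_colon_singleton, Submodule.mem_bot,
      show r • (Ideal.Quotient.mk I) f = Ideal.Quotient.mk I (r * f) from rfl,
      Ideal.Quotient.eq_zero_iff_mem]

lemma mem_PF_iff [Nonempty (Fin n)] (A : Finset (Fin n)) (hA : A.Nonempty)
    {f : MvPolynomial (Fin n) K} :
    f ∈ PF (K := K) A ↔ ∀ s ∈ f.support, 1 ≤ wt A s := by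
  rw [← pow_one (PF (K := K) A), mem_pow_PF_iff A hA]

lemma PF_isPrime [Nonempty (Fin n)] (A : Finset (Fin n)) (hA : A.Nonempty) :
    (PF (K := K) A).IsPrime := by
  classical
  constructor
  · rw [Ideal.ne_top_iff_one]
    rw [mem_PF_iff A hA]
    push_neg
    refine ⟨0, ?_, by simp [wt_zero]⟩
    rw [show (1 : MvPolynomial (Fin n) K) = monomial 0 1 from rfl, support_monomial]
    simp
  · intro a b hab
    by_cases hb : b ∈ PF (K := K) A
    · exact Or.inr hb
    · left
      rw [← pow_one (PF (K := K) A)] at hab ⊢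
      exact primary_step A hA 1 hab (by rwa [pow_one])

lemma pow_PF_isPrimary [Nonempty (Fin n)] (A : Finset (Fin n)) (hA : A.Nonempty) (d : ℕ)
    (hd : d ≠ 0) : (PF (K := K) A ^ d).IsPrimary := by
  classical
  rw [Ideal.isPrimary_iff]
  constructor
  · rw [Ideal.ne_top_iff_one, mem_pow_PF_iff A hA]
    push_neg
    refine ⟨0, ?_, by rw [wt_zero]; omega⟩
    rw [show (1 : MvPolynomial (Fin n) K) = monomial 0 1 from rfl, support_monomial]
    simp
  · intro x y hxy
    by_cases hy : y ∈ PF (K := K) A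
    · right
      rw [Ideal.radical_pow _ hd, (PF_isPrime A hA).radical]
      exact hy
    · left
      exact primary_step A hA d hxy (by rwa [pow_one])

lemma colon_witness [Nonempty (Fin n)] (𝓕 : Finset (Finset (Fin n)))
    (hne : ∀ A ∈ 𝓕, A.Nonempty) (A₀ : Finset (Fin n)) (hA₀ : A₀ ∈ 𝓕) :
    ∃ u : MvPolynomial (Fin n) K,
      (∏ A ∈ 𝓕, PF (K := K) A).colon (Ideal.span {u}) = PF (K := K) A₀ := by
  classical
  -- choice of a variable in each B: outside A₀ whenever possible
  set c₀ : Finset (Fin n) → Fin n := fun B =>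
    if h : (B \ A₀).Nonempty then h.choose
    else if h2 : B.Nonempty then h2.choose else Classical.arbitrary _ with hc₀
  have hc₀mem : ∀ B ∈ 𝓕, c₀ B ∈ B := by
    intro B hB
    rw [hc₀]
    by_cases h : (B \ A₀).Nonempty
    · simp only [dif_pos h]
      exact (Finset.mem_sdiff.mp h.choose_spec).1
    · simp only [dif_neg h, dif_pos (hne B hB)]
      exact (hne B hB).choose_spec
  have hc₀A₀ : ∀ B ∈ 𝓕, (c₀ B ∈ A₀ ↔ B ⊆ A₀) := by
    intro B hB
    rw [hc₀]
    by_cases h : (B \ A₀).Nonempty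
    · simp only [dif_pos h]
      constructor
      · intro hc
        exact absurd hc (Finset.mem_sdiff.mp h.choose_spec).2
      · intro hsub
        exfalso
        obtain ⟨j, hj⟩ := h
        have := Finset.mem_sdiff.mp hj
        exact this.2 (hsub this.1)
    · have hsub : B ⊆ A₀ := by
        intro j hj
        by_contra hjA
        exact h ⟨j, Finset.mem_sdiff.mpr ⟨hj, hjA⟩⟩
      simp only [dif_neg h, dif_pos (hne B hB)]
      exact ⟨fun _ => hsub, fun _ => hsub (hne B hB).choose_spec⟩
  set v : Fin n →₀ ℕ := ∑ B ∈ 𝓕.erase A₀, Finsupp.single (c₀ B) 1 with hv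
  have hwtv : wt A₀ v = dd 𝓕 A₀ - 1 := by
    rw [hv, wt_finset_sum]
    have : ∀ B ∈ 𝓕.erase A₀, wt A₀ (Finsupp.single (c₀ B) 1) =
        if B ⊆ A₀ then 1 else 0 := by
      intro B hB
      rw [wt_single]
      congr 1
      simp only [eq_iff_iff]
      exact hc₀A₀ B (Finset.mem_of_mem_erase hB)
    rw [Finset.sum_congr rfl this, ← Finset.card_filter]
    have he : (𝓕.erase A₀).filter (· ⊆ A₀) = (𝓕.filter (· ⊆ A₀)).erase A₀ := by
      ext B
      simp only [Finset.mem_filter, Finset.mem_erase]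
      tauto
    rw [he]
    have hce : ((𝓕.filter (fun x => x ⊆ A₀)).erase A₀).card =
        (𝓕.filter (fun x => x ⊆ A₀)).card - 1 :=
      Finset.card_erase_of_mem (Finset.mem_filter.mpr ⟨hA₀, Finset.Subset.refl A₀⟩)
    rw [hce]
    rfl
  have hddpos : 1 ≤ dd 𝓕 A₀ :=
    Finset.card_pos.mpr ⟨A₀, Finset.mem_filter.mpr ⟨hA₀, Finset.Subset.refl A₀⟩⟩
  refine ⟨monomial v 1, le_antisymm ?_ ?_⟩
  · -- colon ⊆ PF A₀
    intro g hg
    rw [Ideal.mem_colon_span_singleton] at hg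
    rw [mem_PF_iff A₀ (hne A₀ hA₀)]
    by_contra hcon
    push_neg at hcon
    obtain ⟨s, hs, hswt⟩ := hcon
    have hswt : wt A₀ s = 0 := by omega
    have hsv : s + v ∈ (g * monomial v 1).support := by
      rw [mem_support_iff, coeff_mul_monomial]
      simpa using mem_support_iff.mp hs
    obtain ⟨c, hc, hcle⟩ := (mem_prod_PF_iff 𝓕 id).mp hg (s + v) hsv
    -- weight count
    have h1 : dd 𝓕 A₀ ≤ wt A₀ (∑ B ∈ 𝓕, Finsupp.single (c B) 1) := by
      rw [wt_finset_sum]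
      have : ∀ B ∈ 𝓕.filter (· ⊆ A₀), wt A₀ (Finsupp.single (c B) 1) = 1 := by
        intro B hB
        obtain ⟨hB𝓕, hBA₀⟩ := Finset.mem_filter.mp hB
        rw [wt_single, if_pos (hBA₀ (hc B hB𝓕))]
      calc dd 𝓕 A₀ = ∑ B ∈ 𝓕.filter (· ⊆ A₀), 1 := by simp [dd]
        _ = ∑ B ∈ 𝓕.filter (· ⊆ A₀), wt A₀ (Finsupp.single (c B) 1) :=
            (Finset.sum_congr rfl this).symm
        _ ≤ ∑ B ∈ 𝓕, wt A₀ (Finsupp.single (c B) 1) :=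
            Finset.sum_le_sum_of_subset (Finset.filter_subset _ _)
    have h2 : wt A₀ (s + v) = dd 𝓕 A₀ - 1 := by rw [wt_add, hswt, hwtv, zero_add]
    have := le_trans h1 (wt_mono hcle)
    omega
  · -- PF A₀ ⊆ colon
    rw [PF, Ideal.span_le]
    rintro _ ⟨i, hi, rfl⟩
    rw [SetLike.mem_coe, Ideal.mem_colon_span_singleton]
    have hXi : (X i : MvPolynomial (Fin n) K) * monomial v 1 = monomial (Finsupp.single i 1 + v) 1 := by
      rw [show (X i : MvPolynomial (Fin n) K) = monomial (Finsupp.single i 1) 1 from rfl,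
        monomial_mul, one_mul]
    rw [hXi]
    refine (mem_prod_PF_iff 𝓕 id).mpr ?_
    intro s hs
    rw [support_monomial, if_neg (one_ne_zero)] at hs
    rw [Finset.mem_singleton] at hs
    subst hs
    refine ⟨fun B => if B = A₀ then i else c₀ B, ?_, ?_⟩
    · intro B hB
      show (if B = A₀ then i else c₀ B) ∈ B
      by_cases hBA : B = A₀
      · subst hBA
        rw [if_pos rfl]
        simpa using hi
      · rw [if_neg hBA]; exact hc₀mem B hB
    · have : (∑ B ∈ 𝓕, Finsupp.single (if B = A₀ then i else c₀ B) (1:ℕ)) =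
          Finsupp.single i 1 + v := by
        rw [← Finset.add_sum_erase 𝓕 _ hA₀, if_pos rfl, hv]
        congr 1
        refine Finset.sum_congr rfl fun B hB => ?_
        rw [if_neg (Finset.ne_of_mem_erase hB)]
      rw [this]

end Stmt11Aux

open Stmt11Aux in
/-- If `𝓕 = {A_1, …, A_r}` is a family of nonempty subsets of `[n]` closed under unions of
intersecting pairs, then the transversal polymatroidal ideal `I = P_{A_1} ⋯ P_{A_r}`
satisfies `Ass(S/I) = {P_A : A ∈ 𝓕}`. -/
theorem stmt11 {K : Type} [Field K] {n : ℕ} (𝓕 : Finset (Finset (Fin n)))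
    (h𝓕 : 𝓕.Nonempty) (hne : ∀ A ∈ 𝓕, A.Nonempty)
    (hclosed : ∀ A ∈ 𝓕, ∀ B ∈ 𝓕, (A ∩ B).Nonempty → A ∪ B ∈ 𝓕) :
    associatedPrimes (MvPolynomial (Fin n) K)
        (MvPolynomial (Fin n) K ⧸ ∏ A ∈ 𝓕, PF (K := K) A) =
      {Q | ∃ A ∈ 𝓕, Q = PF (K := K) A} := by
  classical
  have hnn : Nonempty (Fin n) := by
    obtain ⟨A, hA⟩ := h𝓕
    obtain ⟨i, _⟩ := hne A hA
    exact ⟨i⟩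
  ext P
  simp only [Set.mem_setOf_eq, AssociatedPrimes.mem_iff]
  rw [isAssociatedPrime_quotient_iff]
  constructor
  · rintro ⟨hP, f, hPf⟩
    have hd := decomp (K := K) 𝓕 hne hclosed
    have hcolon : (∏ A ∈ 𝓕, PF (K := K) A).colon (Ideal.span {f}) =
        𝓕.inf (fun A => (PF (K := K) A ^ dd 𝓕 A).colon (Ideal.span {f})) := by
      ext r
      rw [Ideal.mem_colon_span_singleton, hd, Submodule.mem_finsetInf]
      simp only [Submodule.mem_finsetInf, Ideal.mem_colon_span_singleton]
    have hprodle : ∏ A ∈ 𝓕, ((PF (K := K) A ^ dd 𝓕 A).colon (Ideal.span {f})) ≤ P := by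
      rw [hPf, hcolon]
      exact Ideal.prod_le_inf
    obtain ⟨A₀, hA₀, hle⟩ := (Ideal.IsPrime.prod_le hP).mp hprodle
    have hge : P ≤ (PF (K := K) A₀ ^ dd 𝓕 A₀).colon (Ideal.span {f}) := by
      rw [hPf, hcolon]
      exact Finset.inf_le hA₀
    have hPeq : P = (PF (K := K) A₀ ^ dd 𝓕 A₀).colon (Ideal.span {f}) :=
      le_antisymm hge hle
    have hddpos : dd 𝓕 A₀ ≠ 0 := by
      have h1 : 0 < dd 𝓕 A₀ :=
        Finset.card_pos.mpr ⟨A₀, Finset.mem_filter.mpr ⟨hA₀, Finset.Subset.refl A₀⟩⟩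
      omega
    have hass : IsAssociatedPrime P
        (MvPolynomial (Fin n) K ⧸ (PF (K := K) A₀ ^ dd 𝓕 A₀)) :=
      isAssociatedPrime_quotient_iff.mpr ⟨hP, f, hPeq⟩
    have := hass.eq_radical (pow_PF_isPrimary A₀ (hne A₀ hA₀) _ hddpos)
    rw [Ideal.radical_pow _ hddpos, (PF_isPrime A₀ (hne A₀ hA₀)).radical] at this
    exact ⟨A₀, hA₀, this⟩
  · rintro ⟨A₀, hA₀, rfl⟩
    obtain ⟨u, hu⟩ := colon_witness (K := K) 𝓕 hne A₀ hA₀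
    exact ⟨PF_isPrime A₀ (hne A₀ hA₀), u, hu.symm⟩
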